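/- arXiv:2401.06363 — 2 statements merged into one kernel-verified Lean document; each statement's English description precedes it below -/
import Mathlib

section
/- Let m ∈ ℤ_{>0}. There exists C > 0 such that for every φ ∈ L¹_m(ℝⁿ) and every t > 0: Σ_{|α|=m} ‖[x^α, e^{tνΔ}]φ‖_{L¹} ≤ C { t^{1/2} ‖|x|^{m−1} φ‖_{L¹} + (t^{1/2} + t^{m/2}) ‖φ‖_{L¹} }. -/
open MeasureTheory Real Filter
open scoped ENNReal Topology BigOperators

noncomputable section

abbrev Eu (n : ℕ) := EuclideanSpace ℝ (Fin n)

/-- complex Gaussian `G_{tν}` -/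
def Gf (n : ℕ) (ν : ℂ) (t : ℝ) (x : Eu n) : ℂ :=
  ((4 * Real.pi * t : ℝ) * ν) ^ (-(n:ℂ)/2) * Complex.exp (-((‖x‖^2 : ℝ) : ℂ) / (4 * t * ν))

/-- parabolic dilation -/
def dil {n : ℕ} (t : ℝ) (φ : Eu n → ℂ) : Eu n → ℂ :=
  fun x => ((t ^ (-(n:ℝ)/2) : ℝ) : ℂ) * φ ((t ^ (-(1:ℝ)/2) : ℝ) • x)

/-- convolution -/
def conv {n : ℕ} (f g : Eu n → ℂ) : Eu n → ℂ := fun x => ∫ y, f (x - y) * g y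

/-- CGL semigroup -/
def cgl (n : ℕ) (ν : ℂ) (t : ℝ) (φ : Eu n → ℂ) : Eu n → ℂ := conv (Gf n ν t) φ

/-- partial derivative -/
def pd {n : ℕ} (j : Fin n) (f : Eu n → ℂ) : Eu n → ℂ :=
  fun x => fderiv ℝ f x (EuclideanSpace.single j 1)

/-- multi-index derivative ∂^α -/
def mderiv {n : ℕ} (α : Fin n → ℕ) (f : Eu n → ℂ) : Eu n → ℂ :=
  (List.finRange n).foldr (fun j g => (pd j)^[α j] g) f

def msum {n : ℕ} (α : Fin n → ℕ) : ℕ := ∑ j, α j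

def xmon {n : ℕ} (α : Fin n → ℕ) (x : Eu n) : ℝ := ∏ j, (x j) ^ (α j)

def mfact {n : ℕ} (α : Fin n → ℕ) : ℕ := ∏ j, Nat.factorial (α j)

/-- complex Hermite polynomial h_{ν,α} -/
def hpoly {n : ℕ} (ν : ℂ) (α : Fin n → ℕ) (x : Eu n) : ℂ :=
  ∑ β ∈ Finset.Iic α, if ∀ j, 2 * β j ≤ α j then
    ((-1:ℂ)^(msum β) * (mfact α : ℂ)) / ((mfact β : ℂ) * (mfact (α - 2 • β) : ℂ))
      * ν ^ (-(msum (α - β) : ℤ)) * ((xmon (α - 2 • β) x : ℝ) : ℂ)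
  else 0

/-- multi-indices of total degree k -/
def multiIdx (n k : ℕ) : Finset (Fin n → ℕ) :=
  Finset.filter (fun β => msum β = k) (Finset.Iic (fun _ => k))

/-- moment M_β(φ) -/
def mom {n : ℕ} (β : Fin n → ℕ) (φ : Eu n → ℂ) : ℂ :=
  ((mfact β : ℂ))⁻¹ * ∫ x, ((xmon β x : ℝ) : ℂ) * φ x

/-- asymptotic profile Λ_{α,N}(t;φ) -/
def Lam {n : ℕ} (ν : ℂ) (α : Fin n → ℕ) (N : ℕ) (t : ℝ) (φ : Eu n → ℂ) : Eu n → ℂ :=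
  fun x => (-2:ℂ) ^ (-(msum α : ℤ)) * ((t ^ (-(msum α : ℝ)/2) : ℝ) : ℂ) *
    ∑ k ∈ Finset.range (N+1), (2:ℂ) ^ (-(k:ℤ)) * ((t ^ (-(k:ℝ)/2) : ℝ) : ℂ) *
      ∑ β ∈ multiIdx n k, mom β φ * dil t (fun y => hpoly ν (α+β) y * Gf n ν 1 y) x

/-- weighted L¹ space membership -/
def L1m {n : ℕ} (m : ℕ) (φ : Eu n → ℂ) : Prop :=
  ∀ α : Fin n → ℕ, msum α ≤ m → Integrable (fun x => ((xmon α x : ℝ) : ℂ) * φ x)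

end
section Aux
open Finset

variable {n : ℕ}

lemma eu_apply_sub (x y : Eu n) (j : Fin n) : (x - y) j = x j - y j := rfl

lemma abs_apply_le_norm (y : Eu n) (j : Fin n) : |y j| ≤ ‖y‖ := by
  have h := EuclideanSpace.norm_eq y
  have h2 : (y j)^2 ≤ ∑ i, ‖y i‖^2 :=
    Finset.single_le_sum (f := fun i => ‖y i‖^2) (fun i _ => by positivity) (Finset.mem_univ j)
      |>.trans_eq' (by simp [Real.norm_eq_abs, sq_abs])
  rw [h]
  rw [show |y j| = Real.sqrt ((y j)^2) by rw [Real.sqrt_sq_eq_abs]]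
  exact Real.sqrt_le_sqrt h2

lemma norm_le_sum_abs (y : Eu n) : ‖y‖ ≤ ∑ j, |y j| := by
  rw [EuclideanSpace.norm_eq]
  have h2 : ∑ i, ‖y i‖^2 ≤ (∑ j, |y j|)^2 := by
    refine (Finset.sum_sq_le_sq_sum_of_nonneg (fun i _ => abs_nonneg (y i))).trans_eq' ?_
    simp [Real.norm_eq_abs, sq_abs]
  refine (Real.sqrt_le_sqrt h2).trans_eq ?_
  exact Real.sqrt_sq (Finset.sum_nonneg fun j _ => abs_nonneg _)

lemma abs_xmon_le (α : Fin n → ℕ) (y : Eu n) : |xmon α y| ≤ ‖y‖ ^ msum α := by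
  unfold xmon msum
  rw [Finset.abs_prod, ← Finset.prod_pow_eq_pow_sum]
  refine Finset.prod_le_prod (fun j _ => by positivity) (fun j _ => ?_)
  rw [abs_pow]
  exact pow_le_pow_left₀ (abs_nonneg _) (abs_apply_le_norm y j) _

lemma mem_multiIdx {k : ℕ} {α : Fin n → ℕ} : α ∈ multiIdx n k ↔ msum α = k := by
  unfold multiIdx
  simp only [Finset.mem_filter, Finset.mem_Iic, and_iff_right_iff_imp]
  intro h
  intro j
  have h2 : α j ≤ msum α := Finset.single_le_sum (f := fun i => α i) (fun i _ => Nat.zero_le _) (Finset.mem_univ j)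
  simpa [h] using h2

end Aux
section Aux2
open Finset MeasureTheory

variable {n : ℕ}

lemma msum_eq_zero_iff {β : Fin n → ℕ} : msum β = 0 ↔ β = 0 := by
  unfold msum
  rw [Finset.sum_eq_zero_iff]
  constructor
  · intro h; funext j; exact h j (Finset.mem_univ j)
  · intro h j _; rw [h]; rfl

lemma msum_add (α β : Fin n → ℕ) : msum (α + β) = msum α + msum β := by
  unfold msum; rw [← Finset.sum_add_distrib]; rfl

lemma msum_add_msum_sub {α β : Fin n → ℕ} (h : β ≤ α) : msum β + msum (α - β) = msum α := by
  unfold msum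
  rw [← Finset.sum_add_distrib]
  refine Finset.sum_congr rfl fun j _ => ?_
  have hj : β j ≤ α j := h j
  simp only [Pi.sub_apply]
  omega

lemma msum_le_of_le {α β : Fin n → ℕ} (h : β ≤ α) : msum β ≤ msum α :=
  Finset.sum_le_sum fun j _ => h j

lemma msum_single (j : Fin n) : msum (Pi.single j 1) = 1 := by
  unfold msum
  simp [Pi.single_apply]

lemma xmon_add (γ δ : Fin n → ℕ) (y : Eu n) : xmon (γ + δ) y = xmon γ y * xmon δ y := by
  unfold xmon
  rw [← Finset.prod_mul_distrib]
  exact Finset.prod_congr rfl fun j _ => by rw [Pi.add_apply, pow_add]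

lemma xmon_single (j : Fin n) (y : Eu n) : xmon (Pi.single j 1) y = y j := by
  unfold xmon
  rw [← Finset.mul_prod_erase _ _ (Finset.mem_univ j)]
  rw [Pi.single_eq_same, pow_one]
  rw [Finset.prod_congr rfl (fun i hi => by
    rw [Pi.single_eq_of_ne (Finset.mem_erase.1 hi).1, pow_zero])]
  simp

/-- domination of `‖y‖^k` by monomials of degree `k` -/
lemma norm_pow_le_sum_xmon (k : ℕ) :
    ∃ C : ℝ, 0 ≤ C ∧ ∀ y : Eu n, ‖y‖ ^ k ≤ C * ∑ γ ∈ multiIdx n k, |xmon γ y| := by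
  induction k with
  | zero =>
      refine ⟨1, zero_le_one, fun y => ?_⟩
      have h0 : (0 : Fin n → ℕ) ∈ multiIdx n 0 := mem_multiIdx.2 (by simp [msum])
      have h1 : (1:ℝ) ≤ ∑ γ ∈ multiIdx n 0, |xmon γ y| := by
        have := Finset.single_le_sum (f := fun γ => |xmon γ y|) (fun γ _ => abs_nonneg _) h0
        simpa [xmon] using this
      simpa using h1
  | succ k ih =>
      obtain ⟨C, hC0, hC⟩ := ih
      refine ⟨C * n, by positivity, fun y => ?_⟩
      have h1 : ‖y‖ ^ (k+1) ≤ (∑ j, |y j|) * ‖y‖ ^ k := by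
        rw [pow_succ, mul_comm]
        exact mul_le_mul_of_nonneg_right (norm_le_sum_abs y) (by positivity)
      have h2 : (∑ j, |y j|) * ‖y‖ ^ k ≤ (∑ j, |y j|) * (C * ∑ γ ∈ multiIdx n k, |xmon γ y|) :=
        mul_le_mul_of_nonneg_left (hC y) (Finset.sum_nonneg fun j _ => abs_nonneg _)
      refine h1.trans (h2.trans ?_)
      rw [Finset.sum_mul]
      have h3 : ∀ j : Fin n, |y j| * (C * ∑ γ ∈ multiIdx n k, |xmon γ y|)
          ≤ C * ∑ δ ∈ multiIdx n (k+1), |xmon δ y| := by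
        intro j
        have key : ∀ γ ∈ multiIdx n k, |y j| * |xmon γ y| = |xmon (γ + Pi.single j 1) y| := by
          intro γ _
          rw [xmon_add, xmon_single, abs_mul, mul_comm]
        have himg : ∀ γ ∈ multiIdx n k, γ + Pi.single j 1 ∈ multiIdx n (k+1) := by
          intro γ hγ
          exact mem_multiIdx.2 (by rw [msum_add, msum_single, mem_multiIdx.1 hγ])
        calc |y j| * (C * ∑ γ ∈ multiIdx n k, |xmon γ y|)
            = C * ∑ γ ∈ multiIdx n k, |y j| * |xmon γ y| := by
              rw [Finset.mul_sum, Finset.mul_sum, Finset.mul_sum]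
              exact Finset.sum_congr rfl fun γ _ => by ring
          _ = C * ∑ γ ∈ multiIdx n k, |xmon (γ + Pi.single j 1) y| :=
              congrArg _ (Finset.sum_congr rfl key)
          _ ≤ C * ∑ δ ∈ multiIdx n (k+1), |xmon δ y| := by
              refine mul_le_mul_of_nonneg_left ?_ hC0
              have hinj : ∀ a ∈ multiIdx n k, ∀ b ∈ multiIdx n k,
                  a + Pi.single j 1 = b + Pi.single j 1 → a = b := fun a _ b _ h => by
                funext i; have := congrFun h i; simpa using this
              rw [show (∑ γ ∈ multiIdx n k, |xmon (γ + Pi.single j 1) y|)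
                  = ∑ δ ∈ (multiIdx n k).image (fun γ => γ + Pi.single j 1), |xmon δ y|
                from (Finset.sum_image (f := fun δ => |xmon δ y|) (g := fun γ => γ + Pi.single j 1) hinj).symm]
              refine Finset.sum_le_sum_of_subset_of_nonneg ?_ (fun _ _ _ => abs_nonneg _)
              intro δ hδ
              obtain ⟨γ, hγ, rfl⟩ := Finset.mem_image.1 hδ
              exact himg γ hγ
      calc ∑ j : Fin n, |y j| * (C * ∑ γ ∈ multiIdx n k, |xmon γ y|)
          ≤ ∑ _j : Fin n, C * ∑ δ ∈ multiIdx n (k+1), |xmon δ y| := Finset.sum_le_sum fun j _ => h3 j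
        _ = C * n * ∑ δ ∈ multiIdx n (k+1), |xmon δ y| := by
            rw [Finset.sum_const]
            simp [mul_assoc, mul_comm, mul_left_comm]

end Aux2
section Aux3
open Finset MeasureTheory

variable {n : ℕ}

lemma integrable_of_L1m {m : ℕ} {φ : Eu n → ℂ} (hφ : L1m m φ) : Integrable φ := by
  have h := hφ 0 (by simp [msum])
  have : (fun x : Eu n => ((xmon 0 x : ℝ) : ℂ) * φ x) = φ := by
    funext x; simp [xmon]
  rwa [this] at h

lemma integrable_norm_pow_mul {m k : ℕ} {φ : Eu n → ℂ} (hφ : L1m m φ) (hk : k ≤ m) :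
    Integrable (fun y : Eu n => ‖y‖ ^ k * ‖φ y‖) := by
  obtain ⟨C, hC0, hC⟩ := norm_pow_le_sum_xmon (n := n) k
  have hint : Integrable (fun y : Eu n => C * ∑ γ ∈ multiIdx n k, |xmon γ y| * ‖φ y‖) := by
    refine Integrable.const_mul ?_ C
    refine integrable_finset_sum _ fun γ hγ => ?_
    have h := (hφ γ (by rw [mem_multiIdx.1 hγ]; exact hk)).norm
    have : (fun x : Eu n => ‖((xmon γ x : ℝ) : ℂ) * φ x‖) = fun y => |xmon γ y| * ‖φ y‖ := by
      funext y; rw [norm_mul, Complex.norm_real, Real.norm_eq_abs]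
    rwa [this] at h
  refine hint.mono' ?_ ?_
  · exact ((continuous_norm.pow k).aestronglyMeasurable).mul
      (integrable_of_L1m hφ).aestronglyMeasurable.norm
  · refine Filter.Eventually.of_forall fun y => ?_
    rw [Real.norm_eq_abs, abs_of_nonneg (by positivity)]
    calc ‖y‖^k * ‖φ y‖ ≤ (C * ∑ γ ∈ multiIdx n k, |xmon γ y|) * ‖φ y‖ :=
          mul_le_mul_of_nonneg_right (hC y) (norm_nonneg _)
      _ = C * ∑ γ ∈ multiIdx n k, |xmon γ y| * ‖φ y‖ := by
          rw [mul_assoc, Finset.sum_mul]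

/-- multinomial expansion of a monomial -/
lemma xmon_expand (α : Fin n → ℕ) (x y : Eu n) :
    xmon α x = ∑ β ∈ Finset.Iic α,
      ((∏ j, (α j).choose (β j) : ℕ) : ℝ) * (xmon β (x - y) * xmon (α - β) y) := by
  have h1 : xmon α x = ∏ j, ((x - y) j + y j) ^ (α j) := by
    unfold xmon
    exact Finset.prod_congr rfl fun j _ => by rw [eu_apply_sub, sub_add_cancel]
  rw [h1]
  have h2 : ∀ j : Fin n, ((x - y) j + y j) ^ (α j)
      = ∑ b ∈ Finset.range (α j + 1), ((x-y) j)^b * (y j)^(α j - b) * ((α j).choose b : ℝ) :=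
    fun j => add_pow _ _ _
  rw [Finset.prod_congr rfl fun j _ => h2 j, Finset.prod_univ_sum]
  have hfin : Fintype.piFinset (fun j => Finset.range (α j + 1)) = Finset.Iic α := by
    ext β
    simp [Fintype.mem_piFinset, Nat.lt_succ_iff, Finset.mem_Iic, Pi.le_def]
  rw [hfin]
  refine Finset.sum_congr rfl fun β _ => ?_
  rw [Finset.prod_mul_distrib, Finset.prod_mul_distrib]
  unfold xmon
  push_cast
  have : ∀ j : Fin n, (y j) ^ (α j - β j) = (y j) ^ ((α - β) j) := fun j => rfl
  rw [Finset.prod_congr rfl fun j _ => this j]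
  ring

/-- bound for the commutator kernel -/
lemma xmon_diff_bound {m : ℕ} (hm : 0 < m) (α : Fin n → ℕ) (hα : msum α = m) (x y : Eu n) :
    |xmon α x - xmon α y| ≤ (∑ β ∈ Finset.Iic α, ((∏ j, (α j).choose (β j) : ℕ) : ℝ)) *
      ∑ j ∈ Finset.Icc 1 m, ‖x - y‖ ^ j * ‖y‖ ^ (m - j) := by
  have h0 : (0 : Fin n → ℕ) ∈ Finset.Iic α := Finset.mem_Iic.2 (fun j => Nat.zero_le _)
  have hexp := xmon_expand α x y
  rw [Finset.sum_eq_sum_sdiff_singleton_add h0] at hexp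
  have hzero : ((∏ j, (α j).choose ((0 : Fin n → ℕ) j) : ℕ) : ℝ)
      * (xmon 0 (x - y) * xmon (α - 0) y) = xmon α y := by
    simp [xmon]
  rw [hzero] at hexp
  have hdiff : xmon α x - xmon α y
      = ∑ β ∈ Finset.Iic α \ {0}, ((∏ j, (α j).choose (β j) : ℕ) : ℝ)
          * (xmon β (x - y) * xmon (α - β) y) := by
    rw [hexp]; ring
  rw [hdiff]
  refine (Finset.abs_sum_le_sum_abs _ _).trans ?_
  have hS0 : (0:ℝ) ≤ ∑ j ∈ Finset.Icc 1 m, ‖x - y‖ ^ j * ‖y‖ ^ (m - j) :=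
    Finset.sum_nonneg fun j _ => by positivity
  have hterm : ∀ β ∈ Finset.Iic α \ {0},
      |((∏ j, (α j).choose (β j) : ℕ) : ℝ) * (xmon β (x - y) * xmon (α - β) y)|
        ≤ ((∏ j, (α j).choose (β j) : ℕ) : ℝ) * ∑ j ∈ Finset.Icc 1 m, ‖x - y‖ ^ j * ‖y‖ ^ (m - j) := by
    intro β hβ
    obtain ⟨hβle, hβne⟩ := Finset.mem_sdiff.1 hβ
    have hβle' : β ≤ α := Finset.mem_Iic.1 hβle
    have hβne' : β ≠ 0 := by simpa using hβne
    have h1le : 1 ≤ msum β := by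
      rcases Nat.eq_zero_or_pos (msum β) with h | h
      · exact absurd (msum_eq_zero_iff.1 h) hβne'
      · exact h
    have hjm : msum β ≤ m := hα ▸ msum_le_of_le hβle'
    have hsub : msum (α - β) = m - msum β := by
      have := msum_add_msum_sub hβle'
      omega
    rw [abs_mul, abs_mul, Nat.abs_cast]
    refine mul_le_mul_of_nonneg_left ?_ (Nat.cast_nonneg _)
    have hb1 : |xmon β (x - y)| ≤ ‖x - y‖ ^ msum β := abs_xmon_le _ _
    have hb2 : |xmon (α - β) y| ≤ ‖y‖ ^ (m - msum β) := hsub ▸ abs_xmon_le _ _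
    have : |xmon β (x - y)| * |xmon (α - β) y| ≤ ‖x - y‖ ^ msum β * ‖y‖ ^ (m - msum β) :=
      mul_le_mul hb1 hb2 (abs_nonneg _) (by positivity)
    refine this.trans ?_
    exact Finset.single_le_sum (f := fun j => ‖x - y‖ ^ j * ‖y‖ ^ (m - j))
      (fun j _ => by positivity) (Finset.mem_Icc.2 ⟨h1le, hjm⟩)
  refine (Finset.sum_le_sum hterm).trans ?_
  rw [← Finset.sum_mul]
  refine mul_le_mul_of_nonneg_right ?_ hS0
  exact Finset.sum_le_sum_of_subset_of_nonneg (Finset.sdiff_subset) (fun _ _ _ => Nat.cast_nonneg _)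

/-- elementary interpolation inequality -/
lemma pow_interp {s r : ℝ} (hs : 0 ≤ s) (hr : 0 ≤ r) {j m : ℕ} (h1 : 1 ≤ j) (hj : j ≤ m) :
    s ^ j * r ^ (m - j) ≤ s * r ^ (m - 1) + s ^ m := by
  rcases le_total r s with h | h
  · have : s ^ j * r ^ (m - j) ≤ s ^ j * s ^ (m - j) :=
      mul_le_mul_of_nonneg_left (pow_le_pow_left₀ hr h _) (by positivity)
    rw [← pow_add] at this
    have hjm : j + (m - j) = m := by omega
    rw [hjm] at this
    nlinarith [mul_nonneg hs (pow_nonneg hr (m-1))]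
  · have hsplit : s ^ j = s * s ^ (j - 1) := by
      rw [← pow_succ']
      congr 1
      omega
    have h2 : s ^ (j-1) ≤ r ^ (j-1) := pow_le_pow_left₀ hs h _
    have : s ^ j * r ^ (m - j) ≤ s * (r ^ (j-1) * r ^ (m - j)) := by
      rw [hsplit]
      have := mul_le_mul_of_nonneg_right h2 (pow_nonneg hr (m-j))
      nlinarith [pow_nonneg hs (j-1), pow_nonneg hr (m-j), mul_nonneg (pow_nonneg hr (j-1)) (pow_nonneg hr (m-j))]
    rw [← pow_add] at this
    have hjm : (j - 1) + (m - j) = m - 1 := by omega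
    rw [hjm] at this
    nlinarith [pow_nonneg hs m]

end Aux3
section Gauss
open Finset MeasureTheory Real

variable {n : ℕ} {ν : ℂ}

lemma continuous_Gf (t : ℝ) : Continuous (Gf n ν t) := by
  unfold Gf
  refine continuous_const.mul (Complex.continuous_exp.comp ?_)
  refine Continuous.div_const ?_ _
  refine Continuous.neg ?_
  exact Complex.continuous_ofReal.comp ((continuous_norm.pow 2))

lemma norm_Gf (hν : 0 < ν.re) {t : ℝ} (ht : 0 < t) (z : Eu n) :
    ‖Gf n ν t z‖ = ((4*π*t) * ‖ν‖) ^ (-(n:ℝ)/2)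
      * rexp (-(ν.re / (4 * Complex.normSq ν) / t) * ‖z‖^2) := by
  have hν0 : ν ≠ 0 := fun h => by simp [h] at hν
  have ht0 : (4*π*t : ℝ) ≠ 0 := by positivity
  have hbase : ((4 * Real.pi * t : ℝ) : ℂ) * ν ≠ 0 :=
    mul_ne_zero (Complex.ofReal_ne_zero.2 ht0) hν0
  unfold Gf
  rw [norm_mul]
  congr 1
  · rw [Complex.norm_cpow_of_ne_zero hbase]
    have him : (-(n:ℂ)/2).im = 0 := by simp
    have hre : (-(n:ℂ)/2).re = -(n:ℝ)/2 := by simp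
    rw [him, hre, mul_zero, Real.exp_zero, div_one]
    congr 1
    rw [norm_mul, Complex.norm_real, Real.norm_eq_abs, abs_of_pos (by positivity)]
  · rw [Complex.norm_exp]
    congr 1
    have hnsν : Complex.normSq ν ≠ 0 := (Complex.normSq_pos.2 hν0).ne'
    have ht' : t ≠ 0 := ne_of_gt ht
    have h4t : (4 : ℂ) * (t : ℂ) * ν = ((4*t : ℝ) : ℂ) * ν := by push_cast; ring
    rw [div_eq_mul_inv, h4t, Complex.mul_re, Complex.inv_re, Complex.inv_im]
    have hns : Complex.normSq (((4*t : ℝ) : ℂ) * ν) = (4*t)^2 * Complex.normSq ν := by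
      rw [map_mul, Complex.normSq_ofReal]; ring
    have hre2 : ((((4*t : ℝ) : ℂ)) * ν).re = 4*t*ν.re := by
      rw [Complex.re_ofReal_mul]
    have him2 : ((((4*t : ℝ) : ℂ)) * ν).im = 4*t*ν.im := by
      rw [Complex.im_ofReal_mul]
    rw [hns, hre2, him2]
    simp only [Complex.neg_re, Complex.neg_im, Complex.ofReal_re, Complex.ofReal_im,
      neg_zero, zero_mul, sub_zero, neg_mul]
    field_simp
end Gauss
section Gauss2
open Finset MeasureTheory Real

variable {n : ℕ} {ν : ℂ}

lemma bpos (hν : 0 < ν.re) : 0 < ν.re / (4 * Complex.normSq ν) := by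
  have hν0 : ν ≠ 0 := fun h => by simp [h] at hν
  have := Complex.normSq_pos.2 hν0
  positivity

lemma norm_Gf_le (hν : 0 < ν.re) {t : ℝ} (ht : 0 < t) (z : Eu n) :
    ‖Gf n ν t z‖ ≤ ((4*π*t) * ‖ν‖) ^ (-(n:ℝ)/2) := by
  rw [norm_Gf hν ht z]
  have h1 : rexp (-(ν.re / (4 * Complex.normSq ν) / t) * ‖z‖^2) ≤ 1 := by
    rw [Real.exp_le_one_iff]
    have hb := bpos (ν := ν) hν
    have : (0:ℝ) ≤ (ν.re / (4 * Complex.normSq ν) / t) * ‖z‖^2 := by positivity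
    linarith
  have h0 : (0:ℝ) ≤ ((4*π*t) * ‖ν‖) ^ (-(n:ℝ)/2) := by
    apply Real.rpow_nonneg
    positivity
  nlinarith

lemma integrable_exp_neg_mul_sq_norm' {c : ℝ} (hc : 0 < c) :
    Integrable (fun z : Eu n => rexp (-c * ‖z‖^2)) := by
  have h := (GaussianFourier.integrable_cexp_neg_mul_sq_norm_add (V := Eu n)
    (b := (c:ℂ)) (by simpa using hc) 0 0).norm
  refine h.congr (Filter.Eventually.of_forall fun z => ?_)
  show ‖Complex.exp _‖ = _
  rw [Complex.norm_exp]
  rw [show (-(c:ℂ) * (‖z‖:ℂ)^2 + 0 * ((inner ℝ (0 : Eu n) z : ℝ) : ℂ))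
      = ((-c * ‖z‖^2 : ℝ) : ℂ) by push_cast; ring, Complex.ofReal_re]

lemma pow_mul_exp_sq_bound (j : ℕ) {c : ℝ} (hc : 0 < c) :
    ∃ M : ℝ, 0 ≤ M ∧ ∀ r : ℝ, 0 ≤ r → r^j * rexp (-c * r^2) ≤ M := by
  refine ⟨(j.factorial : ℝ)/c^j + 1, by positivity, fun r hr => ?_⟩
  have hfc : (0:ℝ) ≤ (j.factorial : ℝ)/c^j := by positivity
  rcases le_total r 1 with h1 | h1
  · have hr1 : r^j ≤ 1 := pow_le_one₀ hr h1
    have he : rexp (-c * r^2) ≤ 1 := by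
      rw [Real.exp_le_one_iff]
      nlinarith
    nlinarith [Real.exp_pos (-c * r^2), pow_nonneg hr j]
  · have hkey : (c*r^2)^j / (j.factorial : ℝ) ≤ rexp (c*r^2) := by
      have hx : (0:ℝ) ≤ c * r^2 := by positivity
      refine le_trans ?_ (Real.sum_le_exp_of_nonneg hx (j+1))
      exact Finset.single_le_sum (f := fun i => (c*r^2)^i / (i.factorial : ℝ))
        (fun i _ => by positivity) (Finset.self_mem_range_succ j)
    have hfact : (0:ℝ) < (j.factorial : ℝ) := by exact_mod_cast j.factorial_pos
    have key2 : c^j * r^j ≤ (j.factorial:ℝ) * rexp (c*r^2) := by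
      have hle : c^j * r^j ≤ (c*r^2)^j := by
        rw [mul_pow]
        have h2 : r^j ≤ (r^2)^j := pow_le_pow_left₀ hr (by nlinarith) j
        have := pow_pos hc j
        nlinarith
      rw [div_le_iff₀ hfact] at hkey
      nlinarith
    have hEF : rexp (-c*r^2) * rexp (c*r^2) = 1 := by
      rw [← Real.exp_add]; simp
    have h3 : c^j * (r^j * rexp (-c*r^2)) ≤ (j.factorial:ℝ) := by
      nlinarith [mul_le_mul_of_nonneg_right key2 (le_of_lt (Real.exp_pos (-c*r^2))),
        Real.exp_pos (-c*r^2), Real.exp_pos (c*r^2)]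
    have h4 : r^j * rexp (-c*r^2) ≤ (j.factorial:ℝ)/c^j :=
      (le_div_iff₀ (pow_pos hc j)).2 (by nlinarith)
    linarith

lemma integrable_pow_mul_exp (j : ℕ) {c : ℝ} (hc : 0 < c) :
    Integrable (fun z : Eu n => ‖z‖^j * rexp (-c * ‖z‖^2)) := by
  obtain ⟨M, hM0, hM⟩ := pow_mul_exp_sq_bound j (half_pos hc)
  refine ((integrable_exp_neg_mul_sq_norm' (half_pos hc)).const_mul M).mono' ?_ ?_
  · exact ((continuous_norm.pow j).mul
      ((Real.continuous_exp.comp (continuous_const.mul (continuous_norm.pow 2))))).aestronglyMeasurable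
  · refine Filter.Eventually.of_forall fun z => ?_
    rw [Real.norm_eq_abs, abs_of_nonneg (by positivity)]
    have hsplit : rexp (-c * ‖z‖^2) = rexp (-(c/2) * ‖z‖^2) * rexp (-(c/2) * ‖z‖^2) := by
      rw [← Real.exp_add]; congr 1; ring
    rw [hsplit, ← mul_assoc]
    exact mul_le_mul_of_nonneg_right (hM ‖z‖ (norm_nonneg z)) (le_of_lt (Real.exp_pos _))

lemma integrable_pow_mul_Gf (hν : 0 < ν.re) (j : ℕ) {t : ℝ} (ht : 0 < t) :
    Integrable (fun z : Eu n => ‖z‖^j * ‖Gf n ν t z‖) := by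
  have hb : 0 < ν.re / (4 * Complex.normSq ν) / t := div_pos (bpos hν) ht
  have := (integrable_pow_mul_exp (n := n) j hb).const_mul (((4*π*t) * ‖ν‖) ^ (-(n:ℝ)/2))
  refine this.congr (Filter.Eventually.of_forall fun z => ?_)
  show _ = ‖z‖^j * ‖Gf n ν t z‖
  rw [norm_Gf hν ht z]
  ring

end Gauss2
section Gauss3
open Finset MeasureTheory Real

variable {n : ℕ} {ν : ℂ}

lemma J_eq (hν : 0 < ν.re) (j : ℕ) {t : ℝ} (ht : 0 < t) :
    ∫ z : Eu n, ‖z‖^j * ‖Gf n ν t z‖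
      = (Real.sqrt t)^j * (((4*π) * ‖ν‖) ^ (-(n:ℝ)/2)
          * ∫ w : Eu n, ‖w‖^j * rexp (-(ν.re/(4*Complex.normSq ν)) * ‖w‖^2)) := by
  have hν0 : ν ≠ 0 := fun h => by simp [h] at hν
  have habs : 0 < ‖ν‖ := by
    simpa using norm_pos_iff.mpr hν0
  set b := ν.re / (4 * Complex.normSq ν) with hbdef
  have hb0 : 0 < b := bpos hν
  set R := Real.sqrt t with hRdef
  have hR0 : 0 < R := Real.sqrt_pos.2 ht
  have hRsq : R^2 = t := Real.sq_sqrt ht.le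
  have hRn : R^n = t ^ ((n:ℝ)/2) := by
    rw [hRdef, Real.sqrt_eq_rpow, ← Real.rpow_natCast (t ^ ((1:ℝ)/2)) n, ← Real.rpow_mul ht.le]
    congr 1
    push_cast
    ring
  have hscal : R^n * ((4*π*t) * ‖ν‖) ^ (-(n:ℝ)/2)
      = ((4*π) * ‖ν‖) ^ (-(n:ℝ)/2) := by
    rw [show (4*π*t) * ‖ν‖ = ((4*π) * ‖ν‖) * t by ring]
    rw [Real.mul_rpow (by positivity) ht.le]
    calc R^n * (((4*π) * ‖ν‖) ^ (-(n:ℝ)/2) * t ^ (-(n:ℝ)/2))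
        = ((4*π) * ‖ν‖) ^ (-(n:ℝ)/2) * (t ^ ((n:ℝ)/2) * t ^ (-(n:ℝ)/2)) := by
          rw [hRn]; ring
      _ = ((4*π) * ‖ν‖) ^ (-(n:ℝ)/2) * t ^ ((n:ℝ)/2 + -(n:ℝ)/2) := by
          rw [Real.rpow_add ht]
      _ = ((4*π) * ‖ν‖) ^ (-(n:ℝ)/2) := by
          rw [show (n:ℝ)/2 + -(n:ℝ)/2 = 0 by ring, Real.rpow_zero, mul_one]
  have h := Measure.integral_comp_smul (volume : Measure (Eu n))
    (fun z : Eu n => ‖z‖^j * ‖Gf n ν t z‖) R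
  rw [show Module.finrank ℝ (Eu n) = n from finrank_euclideanSpace_fin] at h
  have hpt : (fun w : Eu n => ‖R • w‖^j * ‖Gf n ν t (R • w)‖)
      = fun w : Eu n => (R^j * ((4*π*t) * ‖ν‖) ^ (-(n:ℝ)/2))
          * (‖w‖^j * rexp (-b * ‖w‖^2)) := by
    funext w
    rw [norm_smul, norm_Gf hν ht, Real.norm_eq_abs, abs_of_pos hR0, norm_smul,
      Real.norm_eq_abs, abs_of_pos hR0, mul_pow]
    have hexp : -(b / t) * (R * ‖w‖)^2 = -b * ‖w‖^2 := by
      rw [mul_pow, hRsq]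
      field_simp
    rw [hexp]
    ring
  rw [hpt, integral_const_mul] at h
  -- h : C1 * I = |(R^n)⁻¹| • J
  rw [abs_of_pos (by positivity : (0:ℝ) < (R^n)⁻¹), smul_eq_mul] at h
  have hJ : (∫ z : Eu n, ‖z‖^j * ‖Gf n ν t z‖)
      = R^n * ((R^j * ((4*π*t) * ‖ν‖) ^ (-(n:ℝ)/2))
          * ∫ w : Eu n, ‖w‖^j * rexp (-b * ‖w‖^2)) := by
    have hRn0 : (R:ℝ)^n ≠ 0 := by positivity
    field_simp at h ⊢
    linarith [h]
  rw [hJ]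
  rw [show R^n * ((R^j * ((4*π*t) * ‖ν‖) ^ (-(n:ℝ)/2)) * ∫ w : Eu n, ‖w‖^j * rexp (-b * ‖w‖^2))
      = R^j * ((R^n * ((4*π*t) * ‖ν‖) ^ (-(n:ℝ)/2)) * ∫ w : Eu n, ‖w‖^j * rexp (-b * ‖w‖^2)) by ring]
  rw [hscal]

end Gauss3
section MainEst
open Finset MeasureTheory Real

variable {n : ℕ}

private lemma sum_rearr {ι : Type*} (s : Finset ι) (K c1 c2 : ℝ) (f g : ι → ℝ) :
    (K * ∑ j ∈ s, f j * g j) * (c1 * c2) = K * ∑ j ∈ s, (f j * c1) * (g j * c2) := by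
  rw [mul_assoc]
  congr 1
  rw [Finset.sum_mul]
  exact Finset.sum_congr rfl fun j _ => by ring

lemma alpha_bound {m : ℕ} (hm : 0 < m) {ν : ℂ} (hν : 0 < ν.re) {φ : Eu n → ℂ}
    (hsm : StronglyMeasurable φ) (hφ : L1m m φ) {t : ℝ} (ht : 0 < t)
    {α : Fin n → ℕ} (hα : msum α = m) :
    eLpNorm (fun x : Eu n => ((xmon α x : ℝ) : ℂ) * cgl n ν t φ x
        - cgl n ν t (fun y => ((xmon α y : ℝ) : ℂ) * φ y) x) 1 volume
      ≤ ENNReal.ofReal ((∑ β ∈ Finset.Iic α, ((∏ j, (α j).choose (β j) : ℕ) : ℝ)) *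
          ∑ j ∈ Finset.Icc 1 m,
            ((Real.sqrt t)^j * (((4*π) * ‖ν‖) ^ (-(n:ℝ)/2)
              * ∫ w : Eu n, ‖w‖^j * rexp (-(ν.re/(4*Complex.normSq ν)) * ‖w‖^2)))
            * (∫ y : Eu n, ‖y‖^(m-j) * ‖φ y‖)) := by
  set K : ℝ := ∑ β ∈ Finset.Iic α, ((∏ j, (α j).choose (β j) : ℕ) : ℝ) with hKdef
  have hK0 : 0 ≤ K := Finset.sum_nonneg fun β _ => Nat.cast_nonneg _
  set Dc : ℕ → ℝ := fun j => ((4*π) * ‖ν‖) ^ (-(n:ℝ)/2)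
      * ∫ w : Eu n, ‖w‖^j * rexp (-(ν.re/(4*Complex.normSq ν)) * ‖w‖^2) with hDdef
  -- basic integrability
  have hφint : Integrable φ := integrable_of_L1m hφ
  have hGc : Continuous (Gf n ν t) := continuous_Gf t
  have hGb : ∀ z : Eu n, ‖Gf n ν t z‖ ≤ ((4*π*t) * ‖ν‖) ^ (-(n:ℝ)/2) :=
    norm_Gf_le hν ht
  have hGmeas : ∀ x : Eu n, AEStronglyMeasurable (fun y : Eu n => Gf n ν t (x - y)) volume :=
    fun x => (hGc.comp (continuous_const.sub continuous_id)).aestronglyMeasurable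
  have hint1 : ∀ x : Eu n, Integrable (fun y => Gf n ν t (x - y) * φ y) := fun x =>
    hφint.bdd_mul (hGmeas x) (Filter.Eventually.of_forall fun y => hGb (x - y))
  have hxφ : Integrable (fun y : Eu n => ((xmon α y : ℝ) : ℂ) * φ y) := hφ α (le_of_eq hα)
  have hint2 : ∀ x : Eu n,
      Integrable (fun y => Gf n ν t (x - y) * (((xmon α y : ℝ) : ℂ) * φ y)) := fun x =>
    hxφ.bdd_mul (hGmeas x) (Filter.Eventually.of_forall fun y => hGb (x - y))
  -- pointwise representation of the commutator
  have hrep : ∀ x : Eu n, ((xmon α x : ℝ) : ℂ) * cgl n ν t φ x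
      - cgl n ν t (fun y => ((xmon α y : ℝ) : ℂ) * φ y) x
      = ∫ y, (((xmon α x - xmon α y : ℝ)) : ℂ) * (Gf n ν t (x - y) * φ y) := by
    intro x
    have h1 : ((xmon α x : ℝ) : ℂ) * cgl n ν t φ x
        = ∫ y, ((xmon α x : ℝ) : ℂ) * (Gf n ν t (x - y) * φ y) := (integral_const_mul _ _).symm
    have h2 : cgl n ν t (fun y => ((xmon α y : ℝ) : ℂ) * φ y) x
        = ∫ y, Gf n ν t (x - y) * (((xmon α y : ℝ) : ℂ) * φ y) := rfl
    rw [h1, h2, ← integral_sub ((hint1 x).const_mul _) (hint2 x)]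
    refine integral_congr_ae (Filter.Eventually.of_forall fun y => ?_)
    push_cast
    ring
  -- ENNReal-valued kernels
  set u : ℕ → Eu n → ℝ≥0∞ := fun j z => ENNReal.ofReal (‖z‖^j * ‖Gf n ν t z‖) with hu
  set v : ℕ → Eu n → ℝ≥0∞ := fun j y => ENNReal.ofReal (‖y‖^(m-j) * ‖φ y‖) with hv
  have humeas : ∀ j, Measurable (u j) := fun j =>
    ENNReal.measurable_ofReal.comp ((continuous_norm.pow j).mul hGc.norm).measurable
  have hvmeas : ∀ j, Measurable (v j) := fun j =>
    ENNReal.measurable_ofReal.comp (((continuous_norm.pow (m-j)).measurable).mul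
      hsm.norm.measurable)
  have huvmeas : ∀ j, Measurable (fun p : Eu n × Eu n => u j (p.1 - p.2) * v j p.2) := fun j =>
    ((humeas j).comp (measurable_fst.sub measurable_snd)).mul ((hvmeas j).comp measurable_snd)
  -- pointwise bound after taking norms
  have hkey : ∀ x : Eu n,
      (‖((xmon α x : ℝ) : ℂ) * cgl n ν t φ x
          - cgl n ν t (fun y => ((xmon α y : ℝ) : ℂ) * φ y) x‖₊ : ℝ≥0∞)
      ≤ ENNReal.ofReal K * ∑ j ∈ Finset.Icc 1 m, ∫⁻ y, u j (x - y) * v j y := by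
    intro x
    rw [hrep x]
    refine (enorm_integral_le_lintegral_enorm _).trans ?_
    have hbnd : ∀ y : Eu n,
        (‖(((xmon α x - xmon α y : ℝ)) : ℂ) * (Gf n ν t (x - y) * φ y)‖₊ : ℝ≥0∞)
        ≤ ENNReal.ofReal K * ∑ j ∈ Finset.Icc 1 m, u j (x - y) * v j y := by
      intro y
      rw [← enorm_eq_nnnorm, ← ofReal_norm]
      have hre : ‖(((xmon α x - xmon α y : ℝ)) : ℂ) * (Gf n ν t (x - y) * φ y)‖
          ≤ K * ∑ j ∈ Finset.Icc 1 m,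
              (‖x - y‖^j * ‖Gf n ν t (x - y)‖) * (‖y‖^(m-j) * ‖φ y‖) := by
        rw [norm_mul, Complex.norm_real, Real.norm_eq_abs, norm_mul]
        calc |xmon α x - xmon α y| * (‖Gf n ν t (x - y)‖ * ‖φ y‖)
            ≤ (K * ∑ j ∈ Finset.Icc 1 m, ‖x - y‖^j * ‖y‖^(m-j))
                * (‖Gf n ν t (x - y)‖ * ‖φ y‖) :=
              mul_le_mul_of_nonneg_right (xmon_diff_bound hm α hα x y) (by positivity)
          _ = K * ∑ j ∈ Finset.Icc 1 m,
                (‖x - y‖^j * ‖Gf n ν t (x - y)‖) * (‖y‖^(m-j) * ‖φ y‖) :=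
              sum_rearr (Finset.Icc 1 m) K _ _ (fun j => ‖x - y‖^j) (fun j => ‖y‖^(m-j))
      refine (ENNReal.ofReal_le_ofReal hre).trans_eq ?_
      rw [ENNReal.ofReal_mul hK0]
      congr 1
      rw [ENNReal.ofReal_sum_of_nonneg (fun j _ => by positivity)]
      refine Finset.sum_congr rfl fun j _ => ?_
      rw [ENNReal.ofReal_mul (by positivity)]
    refine (lintegral_mono hbnd).trans_eq ?_
    rw [lintegral_const_mul' _ _ ENNReal.ofReal_ne_top]
    congr 1
    refine lintegral_finset_sum' _ fun j _ => ?_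
    exact (((humeas j).comp (measurable_const.sub measurable_id)).mul (hvmeas j)).aemeasurable
  -- per-j evaluation of the double integral
  have hjint : ∀ j ∈ Finset.Icc 1 m, (∫⁻ x, ∫⁻ y, u j (x - y) * v j y)
      = ENNReal.ofReal ((((Real.sqrt t)^j * Dc j)) * ∫ y : Eu n, ‖y‖^(m-j) * ‖φ y‖) := by
    intro j hj
    obtain ⟨hj1, hjm⟩ := Finset.mem_Icc.1 hj
    have hWint : Integrable (fun y : Eu n => ‖y‖^(m-j) * ‖φ y‖) :=
      integrable_norm_pow_mul hφ (by omega)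
    have hW0 : 0 ≤ ∫ y : Eu n, ‖y‖^(m-j) * ‖φ y‖ := integral_nonneg fun y => by positivity
    have hJint : Integrable (fun z : Eu n => ‖z‖^j * ‖Gf n ν t z‖) :=
      integrable_pow_mul_Gf hν j ht
    have hJ0 : 0 ≤ ∫ z : Eu n, ‖z‖^j * ‖Gf n ν t z‖ := integral_nonneg fun z => by positivity
    have hJofReal : (∫⁻ z, u j z) = ENNReal.ofReal (∫ z : Eu n, ‖z‖^j * ‖Gf n ν t z‖) :=
      (ofReal_integral_eq_lintegral_ofReal hJint
        (Filter.Eventually.of_forall fun z => by positivity)).symm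
    have hVofReal : (∫⁻ y, v j y) = ENNReal.ofReal (∫ y : Eu n, ‖y‖^(m-j) * ‖φ y‖) :=
      (ofReal_integral_eq_lintegral_ofReal hWint
        (Filter.Eventually.of_forall fun y => by positivity)).symm
    rw [lintegral_lintegral_swap (huvmeas j).aemeasurable]
    have hin : ∀ y : Eu n, (∫⁻ x, u j (x - y) * v j y)
        = ENNReal.ofReal (∫ z : Eu n, ‖z‖^j * ‖Gf n ν t z‖) * v j y := by
      intro y
      rw [lintegral_mul_const' _ _ ENNReal.ofReal_ne_top,
        lintegral_sub_right_eq_self (u j) y, hJofReal]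
    rw [lintegral_congr hin, lintegral_const_mul' _ _ ENNReal.ofReal_ne_top, hVofReal,
      ← ENNReal.ofReal_mul hJ0, J_eq hν j ht]
  -- assemble
  rw [eLpNorm_one_eq_lintegral_enorm]
  calc (∫⁻ x, (‖((xmon α x : ℝ) : ℂ) * cgl n ν t φ x
          - cgl n ν t (fun y => ((xmon α y : ℝ) : ℂ) * φ y) x‖₊ : ℝ≥0∞))
      ≤ ∫⁻ x, (ENNReal.ofReal K * ∑ j ∈ Finset.Icc 1 m, ∫⁻ y, u j (x - y) * v j y) :=
        lintegral_mono hkey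
    _ = ENNReal.ofReal K * ∑ j ∈ Finset.Icc 1 m, ∫⁻ x, ∫⁻ y, u j (x - y) * v j y := by
        rw [lintegral_const_mul' _ _ ENNReal.ofReal_ne_top]
        congr 1
        refine lintegral_finset_sum' _ fun j _ => ?_
        exact (Measurable.lintegral_prod_right' (huvmeas j)).aemeasurable
    _ = ENNReal.ofReal K * ∑ j ∈ Finset.Icc 1 m,
          ENNReal.ofReal ((((Real.sqrt t)^j * Dc j)) * ∫ y : Eu n, ‖y‖^(m-j) * ‖φ y‖) := by
        congr 1
        exact Finset.sum_congr rfl hjint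
    _ = ENNReal.ofReal K * ENNReal.ofReal (∑ j ∈ Finset.Icc 1 m,
          ((Real.sqrt t)^j * Dc j) * ∫ y : Eu n, ‖y‖^(m-j) * ‖φ y‖) := by
        congr 1
        refine (ENNReal.ofReal_sum_of_nonneg fun j hj => ?_).symm
        have hW0 : 0 ≤ ∫ y : Eu n, ‖y‖^(m-j) * ‖φ y‖ := integral_nonneg fun y => by positivity
        have hD0 : 0 ≤ Dc j := mul_nonneg (Real.rpow_nonneg (by positivity) _)
          (integral_nonneg fun w => by positivity)
        positivity
    _ = ENNReal.ofReal (K * ∑ j ∈ Finset.Icc 1 m,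
          ((Real.sqrt t)^j * Dc j) * ∫ y : Eu n, ‖y‖^(m-j) * ‖φ y‖) :=
        (ENNReal.ofReal_mul hK0).symm

end MainEst
section Final
open Finset MeasureTheory Real

variable {n : ℕ}

lemma W_interp {m j : ℕ} {φ : Eu n → ℂ} (hφ : L1m m φ) {t : ℝ} (ht : 0 < t)
    (h1 : 1 ≤ j) (hj : j ≤ m) :
    (Real.sqrt t)^j * ∫ y : Eu n, ‖y‖^(m-j) * ‖φ y‖
      ≤ Real.sqrt t * (∫ y : Eu n, ‖y‖^(m-1) * ‖φ y‖)
        + (Real.sqrt t)^m * ∫ y : Eu n, ‖φ y‖ := by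
  have hs0 : 0 ≤ Real.sqrt t := Real.sqrt_nonneg t
  have hint1 : Integrable (fun y : Eu n => ‖y‖^(m-j) * ‖φ y‖) :=
    integrable_norm_pow_mul hφ (by omega)
  have hintm1 : Integrable (fun y : Eu n => ‖y‖^(m-1) * ‖φ y‖) :=
    integrable_norm_pow_mul hφ (by omega)
  have hint0 : Integrable (fun y : Eu n => ‖φ y‖) := (integrable_of_L1m hφ).norm
  have hmono : ∫ y : Eu n, (Real.sqrt t)^j * (‖y‖^(m-j) * ‖φ y‖)
      ≤ ∫ y : Eu n, (Real.sqrt t * (‖y‖^(m-1) * ‖φ y‖) + (Real.sqrt t)^m * ‖φ y‖) := by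
    refine integral_mono (hint1.const_mul _)
      ((hintm1.const_mul _).add (hint0.const_mul _)) (fun y => ?_)
    have hp := pow_interp hs0 (norm_nonneg y) h1 hj
    have := mul_le_mul_of_nonneg_right hp (norm_nonneg (φ y))
    calc (Real.sqrt t)^j * (‖y‖^(m-j) * ‖φ y‖)
        = ((Real.sqrt t)^j * ‖y‖^(m-j)) * ‖φ y‖ := by ring
      _ ≤ (Real.sqrt t * ‖y‖^(m-1) + (Real.sqrt t)^m) * ‖φ y‖ := this
      _ = Real.sqrt t * (‖y‖^(m-1) * ‖φ y‖) + (Real.sqrt t)^m * ‖φ y‖ := by ring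
  calc (Real.sqrt t)^j * ∫ y : Eu n, ‖y‖^(m-j) * ‖φ y‖
      = ∫ y : Eu n, (Real.sqrt t)^j * (‖y‖^(m-j) * ‖φ y‖) := (integral_const_mul _ _).symm
    _ ≤ ∫ y : Eu n, (Real.sqrt t * (‖y‖^(m-1) * ‖φ y‖) + (Real.sqrt t)^m * ‖φ y‖) := hmono
    _ = Real.sqrt t * (∫ y : Eu n, ‖y‖^(m-1) * ‖φ y‖)
        + (Real.sqrt t)^m * ∫ y : Eu n, ‖φ y‖ := by
        rw [integral_add (hintm1.const_mul _) (hint0.const_mul _),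
          integral_const_mul, integral_const_mul]

end Final
theorem cgl_commutator_estimate (n m : ℕ) (hm : 0 < m) (ν : ℂ) (hν : 0 < ν.re) :
    ∃ C > 0, ∀ (φ : Eu n → ℂ), L1m m φ → ∀ t : ℝ, 0 < t →
      ∑ α ∈ multiIdx n m,
          MeasureTheory.eLpNorm (fun x : Eu n => ((xmon α x : ℝ) : ℂ) * cgl n ν t φ x
              - cgl n ν t (fun y => ((xmon α y : ℝ) : ℂ) * φ y) x) 1 volume
        ≤ ENNReal.ofReal (C * (t ^ ((1:ℝ)/2) * (∫ x : Eu n, ‖x‖^(m-1) * ‖φ x‖)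
            + (t ^ ((1:ℝ)/2) + t ^ ((m:ℝ)/2)) * ∫ x : Eu n, ‖φ x‖)) := by
  classical
  set Dc : ℕ → ℝ := fun j => ((4*Real.pi) * ‖ν‖) ^ (-(n:ℝ)/2)
      * ∫ w : Eu n, ‖w‖^j * Real.exp (-(ν.re/(4*Complex.normSq ν)) * ‖w‖^2) with hDdef
  have hD0 : ∀ j, 0 ≤ Dc j := fun j => mul_nonneg (Real.rpow_nonneg (by positivity) _)
    (integral_nonneg fun w => by positivity)
  set Dsum : ℝ := ∑ j ∈ Finset.Icc 1 m, Dc j with hDs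
  have hDs0 : 0 ≤ Dsum := Finset.sum_nonneg fun j _ => hD0 j
  set Kc : (Fin n → ℕ) → ℝ := fun α => ∑ β ∈ Finset.Iic α, ((∏ j, (α j).choose (β j) : ℕ) : ℝ)
    with hKdef
  have hKc0 : ∀ α, 0 ≤ Kc α := fun α => Finset.sum_nonneg fun β _ => Nat.cast_nonneg _
  set Ksum : ℝ := ∑ α ∈ multiIdx n m, Kc α with hKs
  have hKs0 : 0 ≤ Ksum := Finset.sum_nonneg fun α _ => hKc0 α
  refine ⟨Ksum * Dsum + 1, by positivity, ?_⟩
  intro φ hφ t ht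
  have hs0 : 0 ≤ Real.sqrt t := Real.sqrt_nonneg t
  -- replace φ by a strongly measurable representative
  obtain ⟨ψ, hψsm, hψae⟩ : ∃ ψ : Eu n → ℂ, StronglyMeasurable ψ ∧ φ =ᵐ[volume] ψ := by
    have h := (integrable_of_L1m hφ).aestronglyMeasurable
    exact ⟨h.mk φ, h.stronglyMeasurable_mk, h.ae_eq_mk⟩
  have hψL1m : L1m m ψ := fun γ hγ => (hφ γ hγ).congr (hψae.mono fun y hy => by simp only [hy])
  have hcgl : ∀ x, cgl n ν t φ x = cgl n ν t ψ x := fun x =>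
    integral_congr_ae (hψae.mono fun y hy => by simp only [hy])
  have hcgl2 : ∀ (α : Fin n → ℕ) (x : Eu n),
      cgl n ν t (fun y => ((xmon α y : ℝ) : ℂ) * φ y) x
        = cgl n ν t (fun y => ((xmon α y : ℝ) : ℂ) * ψ y) x := fun α x =>
    integral_congr_ae (hψae.mono fun y hy => by simp only [hy])
  have hLHS : (∑ α ∈ multiIdx n m,
        MeasureTheory.eLpNorm (fun x : Eu n => ((xmon α x : ℝ) : ℂ) * cgl n ν t φ x
            - cgl n ν t (fun y => ((xmon α y : ℝ) : ℂ) * φ y) x) 1 volume)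
      = ∑ α ∈ multiIdx n m,
        MeasureTheory.eLpNorm (fun x : Eu n => ((xmon α x : ℝ) : ℂ) * cgl n ν t ψ x
            - cgl n ν t (fun y => ((xmon α y : ℝ) : ℂ) * ψ y) x) 1 volume := by
    refine Finset.sum_congr rfl fun α _ => ?_
    congr 1
    funext x
    rw [hcgl x, hcgl2 α x]
  have hR1 : (∫ x : Eu n, ‖x‖^(m-1) * ‖φ x‖) = ∫ x : Eu n, ‖x‖^(m-1) * ‖ψ x‖ :=
    integral_congr_ae (hψae.mono fun y hy => by simp only [hy])
  have hR2 : (∫ x : Eu n, ‖φ x‖) = ∫ x : Eu n, ‖ψ x‖ :=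
    integral_congr_ae (hψae.mono fun y hy => by simp only [hy])
  rw [hLHS, hR1, hR2]
  set A : ℝ := ∫ x : Eu n, ‖x‖^(m-1) * ‖ψ x‖ with hA
  set B : ℝ := ∫ x : Eu n, ‖ψ x‖ with hB
  have hA0 : 0 ≤ A := integral_nonneg fun x => by positivity
  have hB0 : 0 ≤ B := integral_nonneg fun x => by positivity
  have hsqrt : Real.sqrt t = t ^ ((1:ℝ)/2) := by
    rw [Real.sqrt_eq_rpow]
  have hsqm : (Real.sqrt t)^m = t ^ ((m:ℝ)/2) := by
    rw [Real.sqrt_eq_rpow, ← Real.rpow_natCast (t ^ ((1:ℝ)/2)) m, ← Real.rpow_mul ht.le]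
    congr 1
    ring
  -- apply the per-α bound
  calc (∑ α ∈ multiIdx n m,
        MeasureTheory.eLpNorm (fun x : Eu n => ((xmon α x : ℝ) : ℂ) * cgl n ν t ψ x
            - cgl n ν t (fun y => ((xmon α y : ℝ) : ℂ) * ψ y) x) 1 volume)
      ≤ ∑ α ∈ multiIdx n m, ENNReal.ofReal (Kc α *
          ∑ j ∈ Finset.Icc 1 m, ((Real.sqrt t)^j * Dc j)
            * (∫ y : Eu n, ‖y‖^(m-j) * ‖ψ y‖)) :=
        Finset.sum_le_sum fun α hα =>
          alpha_bound hm hν hψsm hψL1m ht (mem_multiIdx.1 hα)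
    _ = ENNReal.ofReal (∑ α ∈ multiIdx n m, Kc α *
          ∑ j ∈ Finset.Icc 1 m, ((Real.sqrt t)^j * Dc j)
            * (∫ y : Eu n, ‖y‖^(m-j) * ‖ψ y‖)) := by
        refine (ENNReal.ofReal_sum_of_nonneg fun α _ => ?_).symm
        refine mul_nonneg (hKc0 α) (Finset.sum_nonneg fun j _ => ?_)
        have hW0 : 0 ≤ ∫ y : Eu n, ‖y‖^(m-j) * ‖ψ y‖ := integral_nonneg fun y => by positivity
        have := hD0 j
        positivity
    _ ≤ ENNReal.ofReal ((Ksum * Dsum + 1) * (t ^ ((1:ℝ)/2) * A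
          + (t ^ ((1:ℝ)/2) + t ^ ((m:ℝ)/2)) * B)) := by
        refine ENNReal.ofReal_le_ofReal ?_
        have hper : ∀ α ∈ multiIdx n m,
            Kc α * ∑ j ∈ Finset.Icc 1 m, ((Real.sqrt t)^j * Dc j)
              * (∫ y : Eu n, ‖y‖^(m-j) * ‖ψ y‖)
            ≤ Kc α * (Dsum * (Real.sqrt t * A + (Real.sqrt t)^m * B)) := by
          intro α _
          refine mul_le_mul_of_nonneg_left ?_ (hKc0 α)
          have hj : ∀ j ∈ Finset.Icc 1 m, ((Real.sqrt t)^j * Dc j)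
              * (∫ y : Eu n, ‖y‖^(m-j) * ‖ψ y‖)
              ≤ Dc j * (Real.sqrt t * A + (Real.sqrt t)^m * B) := by
            intro j hjmem
            obtain ⟨hj1, hjm⟩ := Finset.mem_Icc.1 hjmem
            have hWi := W_interp hψL1m ht hj1 hjm
            calc ((Real.sqrt t)^j * Dc j) * (∫ y : Eu n, ‖y‖^(m-j) * ‖ψ y‖)
                = Dc j * ((Real.sqrt t)^j * ∫ y : Eu n, ‖y‖^(m-j) * ‖ψ y‖) := by ring
              _ ≤ Dc j * (Real.sqrt t * A + (Real.sqrt t)^m * B) :=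
                  mul_le_mul_of_nonneg_left hWi (hD0 j)
          calc (∑ j ∈ Finset.Icc 1 m, ((Real.sqrt t)^j * Dc j)
                * (∫ y : Eu n, ‖y‖^(m-j) * ‖ψ y‖))
              ≤ ∑ j ∈ Finset.Icc 1 m, Dc j * (Real.sqrt t * A + (Real.sqrt t)^m * B) :=
                Finset.sum_le_sum hj
            _ = Dsum * (Real.sqrt t * A + (Real.sqrt t)^m * B) :=
                (Finset.sum_mul _ _ _).symm
        have hsum : (∑ α ∈ multiIdx n m, Kc α *
            ∑ j ∈ Finset.Icc 1 m, ((Real.sqrt t)^j * Dc j)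
              * (∫ y : Eu n, ‖y‖^(m-j) * ‖ψ y‖))
            ≤ Ksum * (Dsum * (Real.sqrt t * A + (Real.sqrt t)^m * B)) := by
          refine (Finset.sum_le_sum hper).trans_eq ?_
          exact (Finset.sum_mul _ _ _).symm
        refine hsum.trans ?_
        rw [← hsqrt, ← hsqm]
        have hEE : Real.sqrt t * A + (Real.sqrt t)^m * B
            ≤ Real.sqrt t * A + (Real.sqrt t + (Real.sqrt t)^m) * B := by
          nlinarith [mul_nonneg hs0 hB0]
        have hE'0 : 0 ≤ Real.sqrt t * A + (Real.sqrt t + (Real.sqrt t)^m) * B := by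
          positivity
        calc Ksum * (Dsum * (Real.sqrt t * A + (Real.sqrt t)^m * B))
            ≤ Ksum * (Dsum * (Real.sqrt t * A + (Real.sqrt t + (Real.sqrt t)^m) * B)) :=
              mul_le_mul_of_nonneg_left (mul_le_mul_of_nonneg_left hEE hDs0) hKs0
          _ ≤ (Ksum * Dsum + 1) * (Real.sqrt t * A + (Real.sqrt t + (Real.sqrt t)^m) * B) := by
              nlinarith [mul_nonneg hKs0 hDs0]
end

section
/- Let p > 1 + 2/n, let u₀ ∈ (L¹ ∩ L^∞)(ℝⁿ), and let u be a global mild solution of ∂_t u − νΔu = f(u) satisfying sup_{q∈[1,∞]} sup_{t>0} (1+t)^{(n/2)(1−1/q)} ‖u(t)‖_{L^q} < ∞. Then for every k ∈ ℤ_{≥0} with k < (n/2)(p−1) − 1, the spacetime moment ψ_k := ∫_0^∞ s^k f(u(s)) ds converges absolutely in L¹(ℝⁿ) ∩ L^∞(ℝⁿ) (i.e., ‖ψ_k‖_{L¹} + ‖ψ_k‖_{L^∞} < ∞). -/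
open MeasureTheory Real Filter
open scoped ENNReal Topology BigOperators

noncomputable section

section Aux

variable {n : ℕ}

/-- pointwise bound ‖f ξ‖ ≤ K ‖ξ‖^p -/
lemma aux_fbound {p K : ℝ} (hK : 0 < K) (hp1 : 1 < p) {f : ℂ → ℂ} (hf0 : f 0 = 0)
    (hf : ∀ ξ η : ℂ, ‖f ξ - f η‖ ≤ K * (‖ξ‖ ^ (p-1) + ‖η‖ ^ (p-1)) * ‖ξ - η‖) (ξ : ℂ) :
    ‖f ξ‖ ≤ K * ‖ξ‖ ^ p := by
  have h := hf ξ 0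
  simp only [hf0, sub_zero, norm_zero] at h
  rw [Real.zero_rpow (by linarith : p - 1 ≠ 0), add_zero] at h
  refine h.trans (le_of_eq ?_)
  rcases eq_or_ne ‖ξ‖ 0 with h0 | h0
  · rw [h0, mul_zero, Real.zero_rpow (by linarith : p ≠ 0), mul_zero]
  · rw [mul_assoc, ← Real.rpow_add_one h0 (p-1), sub_add_cancel]

/-- enorm version -/
lemma aux_fbound_e {p K : ℝ} (hK : 0 < K) (hp1 : 1 < p) {f : ℂ → ℂ} (hf0 : f 0 = 0)
    (hf : ∀ ξ η : ℂ, ‖f ξ - f η‖ ≤ K * (‖ξ‖ ^ (p-1) + ‖η‖ ^ (p-1)) * ‖ξ - η‖) (ξ : ℂ) :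
    (‖f ξ‖₊ : ℝ≥0∞) ≤ ENNReal.ofReal K * (‖ξ‖₊ : ℝ≥0∞) ^ p := by
  show ‖f ξ‖ₑ ≤ ENNReal.ofReal K * ‖ξ‖ₑ ^ p
  rw [← ofReal_norm, ← ofReal_norm,
    ENNReal.ofReal_rpow_of_nonneg (norm_nonneg _) (by linarith : (0:ℝ) ≤ p),
    ← ENNReal.ofReal_mul hK.le]
  exact ENNReal.ofReal_le_ofReal (aux_fbound hK hp1 hf0 hf ξ)

end Aux

end
theorem spacetime_moments_finite (n : ℕ) (hn : 0 < n) (ν : ℂ) (hν : 0 < ν.re)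
    (p K : ℝ) (hK : 0 < K) (hp1 : 1 < p) (hp : 1 + 2/(n:ℝ) < p)
    (f : ℂ → ℂ) (hf0 : f 0 = 0)
    (hf : ∀ ξ η : ℂ, ‖f ξ - f η‖ ≤ K * (‖ξ‖ ^ (p-1) + ‖η‖ ^ (p-1)) * ‖ξ - η‖)
    (u₀ : Eu n → ℂ) (hu₀1 : MeasureTheory.MemLp u₀ 1 volume)
    (hu₀top : MeasureTheory.MemLp u₀ ⊤ volume)
    (u : ℝ → Eu n → ℂ)
    (hmeas : ∀ t, MeasureTheory.AEStronglyMeasurable (u t) volume)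
    (hmild : ∀ t : ℝ, 0 < t → ∀ᵐ x ∂volume,
      u t x = cgl n ν t u₀ x + ∫ s in (0:ℝ)..t, cgl n ν (t-s) (fun y => f (u s y)) x)
    (M : ℝ)
    (hdecay : ∀ q : ℝ≥0∞, 1 ≤ q → ∀ t : ℝ, 0 < t →
      ENNReal.ofReal ((1+t) ^ ((n:ℝ)/2 * (1 - 1/q.toReal)))
          * MeasureTheory.eLpNorm (u t) q volume ≤ ENNReal.ofReal M)
    (k : ℕ) (hk : (k:ℝ) < (n:ℝ)/2 * (p-1) - 1) :
    ∫⁻ s in Set.Ioi (0:ℝ), ENNReal.ofReal (s ^ k)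
        * (MeasureTheory.eLpNorm (fun x => f (u s x)) 1 volume
            + MeasureTheory.eLpNorm (fun x => f (u s x)) ⊤ volume) < ⊤ := by
  set M' : ℝ := max M 0 with hM'def
  have hM'0 : (0:ℝ) ≤ M' := le_max_right _ _
  have hMM' : ENNReal.ofReal M = ENNReal.ofReal M' := by
    rcases le_total 0 M with h | h
    · rw [hM'def, max_eq_left h]
    · rw [hM'def, max_eq_right h, ENNReal.ofReal_zero, ENNReal.ofReal_eq_zero.mpr h]
  have hp0 : (0:ℝ) < p := by linarith
  set a : ℝ := (n:ℝ)/2 * (p-1) with ha_def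
  -- uniform decay bound
  have hub : ∀ q : ℝ≥0∞, 1 ≤ q → ∀ s : ℝ, 0 < s →
      eLpNorm (u s) q volume
        ≤ ENNReal.ofReal M' * ENNReal.ofReal ((1+s) ^ (-((n:ℝ)/2 * (1 - 1/q.toReal)))) := by
    intro q hq s hs
    have h := hdecay q hq s hs
    set e : ℝ := (n:ℝ)/2 * (1 - 1/q.toReal) with he
    have h1s : (0:ℝ) < 1 + s := by linarith
    calc eLpNorm (u s) q volume
        = ENNReal.ofReal ((1+s) ^ (-e)) *
            (ENNReal.ofReal ((1+s) ^ e) * eLpNorm (u s) q volume) := by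
          rw [← mul_assoc, ← ENNReal.ofReal_mul (Real.rpow_nonneg h1s.le _),
            ← Real.rpow_add h1s, neg_add_cancel, Real.rpow_zero, ENNReal.ofReal_one, one_mul]
      _ ≤ ENNReal.ofReal ((1+s) ^ (-e)) * ENNReal.ofReal M := mul_le_mul_right h _
      _ = ENNReal.ofReal M' * ENNReal.ofReal ((1+s) ^ (-e)) := by rw [hMM', mul_comm]
  -- exponent arithmetic
  have hqp0 : (ENNReal.ofReal p) ≠ 0 := by
    simp [ENNReal.ofReal_eq_zero, not_le, hp0]
  have hqptop : (ENNReal.ofReal p) ≠ ⊤ := ENNReal.ofReal_ne_top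
  have hqpto : (ENNReal.ofReal p).toReal = p := ENNReal.toReal_ofReal hp0.le
  have hep : ((n:ℝ)/2 * (1 - 1/p)) * p = a := by
    rw [ha_def]; field_simp
  -- L¹ bound on f ∘ u s
  have hb1 : ∀ s : ℝ, 0 < s →
      eLpNorm (fun x => f (u s x)) 1 volume
        ≤ ENNReal.ofReal (K * M' ^ p) * ENNReal.ofReal ((1+s) ^ (-a)) := by
    intro s hs
    have h1s : (0:ℝ) < 1 + s := by linarith
    have hq1 : (1:ℝ≥0∞) ≤ ENNReal.ofReal p := by
      rw [← ENNReal.ofReal_one]; exact ENNReal.ofReal_le_ofReal hp1.le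
    have hchain : eLpNorm (fun x => f (u s x)) 1 volume
        ≤ ENNReal.ofReal K * (eLpNorm (u s) (ENNReal.ofReal p) volume) ^ p := by
      rw [eLpNorm_one_eq_lintegral_enorm,
        eLpNorm_eq_lintegral_rpow_enorm_toReal hqp0 hqptop, hqpto, ← ENNReal.rpow_mul,
        one_div_mul_cancel hp0.ne', ENNReal.rpow_one]
      calc ∫⁻ x, (‖f (u s x)‖₊ : ℝ≥0∞)
          ≤ ∫⁻ x, ENNReal.ofReal K * (‖u s x‖₊ : ℝ≥0∞) ^ p :=
            lintegral_mono fun x => aux_fbound_e hK hp1 hf0 hf _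
        _ = ENNReal.ofReal K * ∫⁻ x, (‖u s x‖₊ : ℝ≥0∞) ^ p :=
            lintegral_const_mul' _ _ ENNReal.ofReal_ne_top
    refine hchain.trans ?_
    have hu := hub (ENNReal.ofReal p) hq1 s hs
    rw [hqpto] at hu
    calc ENNReal.ofReal K * (eLpNorm (u s) (ENNReal.ofReal p) volume) ^ p
        ≤ ENNReal.ofReal K *
            (ENNReal.ofReal M' * ENNReal.ofReal ((1+s) ^ (-((n:ℝ)/2 * (1 - 1/p))))) ^ p :=
          mul_le_mul_right (ENNReal.rpow_le_rpow hu hp0.le) _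
      _ = ENNReal.ofReal (K * M' ^ p) * ENNReal.ofReal ((1+s) ^ (-a)) := by
          rw [ENNReal.mul_rpow_of_nonneg _ _ hp0.le,
            ENNReal.ofReal_rpow_of_nonneg hM'0 hp0.le,
            ENNReal.ofReal_rpow_of_nonneg (Real.rpow_nonneg h1s.le _) hp0.le,
            ← Real.rpow_mul h1s.le, neg_mul, hep, ← mul_assoc,
            ← ENNReal.ofReal_mul hK.le]
  -- L∞ bound on f ∘ u s
  have hbtop : ∀ s : ℝ, 0 < s →
      eLpNorm (fun x => f (u s x)) ⊤ volume
        ≤ ENNReal.ofReal (K * M' ^ p) * ENNReal.ofReal ((1+s) ^ (-a)) := by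
    intro s hs
    have h1s : (0:ℝ) < 1 + s := by linarith
    have hu := hub ⊤ le_top s hs
    simp only [ENNReal.toReal_top, div_zero, sub_zero, mul_one] at hu
    rw [eLpNorm_exponent_top] at hu ⊢
    set B : ℝ≥0∞ := ENNReal.ofReal M' * ENNReal.ofReal ((1+s) ^ (-((n:ℝ)/2))) with hB
    have hae : ∀ᵐ x ∂(volume : Measure (EuclideanSpace ℝ (Fin n))),
        (‖f (u s x)‖₊ : ℝ≥0∞) ≤ ENNReal.ofReal K * B ^ p := by
      filter_upwards [ae_le_eLpNormEssSup (f := u s) (μ := volume)] with x hx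
      calc (‖f (u s x)‖₊ : ℝ≥0∞) ≤ ENNReal.ofReal K * (‖u s x‖₊ : ℝ≥0∞) ^ p :=
            aux_fbound_e hK hp1 hf0 hf _
        _ ≤ ENNReal.ofReal K * B ^ p :=
            mul_le_mul_right (ENNReal.rpow_le_rpow (le_trans hx hu) hp0.le) _
    refine (essSup_le_of_ae_le _ hae).trans ?_
    have : ENNReal.ofReal K * B ^ p
        = ENNReal.ofReal (K * M' ^ p) * ENNReal.ofReal ((1+s) ^ (-((n:ℝ)/2) * p)) := by
      rw [hB, ENNReal.mul_rpow_of_nonneg _ _ hp0.le,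
        ENNReal.ofReal_rpow_of_nonneg hM'0 hp0.le,
        ENNReal.ofReal_rpow_of_nonneg (Real.rpow_nonneg h1s.le _) hp0.le,
        ← Real.rpow_mul h1s.le, neg_mul, ← mul_assoc, ← ENNReal.ofReal_mul hK.le]
    rw [this]
    refine mul_le_mul_right (ENNReal.ofReal_le_ofReal ?_) _
    refine Real.rpow_le_rpow_of_exponent_le (by linarith) ?_
    rw [ha_def, neg_mul]
    have hn2 : (0:ℝ) ≤ (n:ℝ)/2 := by positivity
    nlinarith [hn2]
  -- combine
  set C : ℝ≥0∞ := 2 * ENNReal.ofReal (K * M' ^ p) with hC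
  have hy : (k:ℝ) - a < -1 := by linarith
  have hfin : ∫⁻ s in Set.Ioi (0:ℝ), ENNReal.ofReal ((1+s) ^ ((k:ℝ) - a)) < ⊤ := by
    have hmp : MeasurePreserving (fun s : ℝ => 1 + s) volume volume :=
      measurePreserving_add_left volume 1
    have hemb : MeasurableEmbedding (fun s : ℝ => 1 + s) :=
      (Homeomorph.addLeft (1:ℝ)).measurableEmbedding
    have hpre : (fun s : ℝ => 1 + s) ⁻¹' Set.Ioi 1 = Set.Ioi 0 := by
      ext s; simp [Set.mem_Ioi]
    have heq : ∫⁻ s in Set.Ioi (0:ℝ), ENNReal.ofReal ((1+s) ^ ((k:ℝ) - a))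
        = ∫⁻ t in Set.Ioi (1:ℝ), ENNReal.ofReal (t ^ ((k:ℝ) - a)) := by
      rw [← hpre]
      exact hmp.setLIntegral_comp_preimage_emb hemb
        (fun t => ENNReal.ofReal (t ^ ((k:ℝ) - a))) _
    rw [heq]
    have hInt : IntegrableOn (fun t : ℝ => t ^ ((k:ℝ) - a)) (Set.Ioi 1) :=
      integrableOn_Ioi_rpow_of_lt hy one_pos
    refine lt_of_le_of_lt (lintegral_mono fun t => ?_) hInt.2
    rw [Real.enorm_eq_ofReal_abs]
    exact ENNReal.ofReal_le_ofReal (le_abs_self _)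
  have hbound : ∀ᵐ s ∂(volume.restrict (Set.Ioi (0:ℝ))),
      ENNReal.ofReal (s ^ k)
          * (eLpNorm (fun x => f (u s x)) 1 volume
              + eLpNorm (fun x => f (u s x)) ⊤ volume)
        ≤ C * ENNReal.ofReal ((1+s) ^ ((k:ℝ) - a)) := by
    filter_upwards [ae_restrict_mem measurableSet_Ioi] with s hs
    have hs' : (0:ℝ) < s := hs
    have h1s : (0:ℝ) < 1 + s := by linarith
    calc ENNReal.ofReal (s ^ k)
          * (eLpNorm (fun x => f (u s x)) 1 volume
              + eLpNorm (fun x => f (u s x)) ⊤ volume)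
        ≤ ENNReal.ofReal (s ^ k) *
            (2 * (ENNReal.ofReal (K * M' ^ p) * ENNReal.ofReal ((1+s) ^ (-a)))) := by
          refine mul_le_mul_right ?_ _
          rw [two_mul]
          exact add_le_add (hb1 s hs') (hbtop s hs')
      _ = C * (ENNReal.ofReal (s ^ k) * ENNReal.ofReal ((1+s) ^ (-a))) := by
          rw [hC]; ring
      _ ≤ C * ENNReal.ofReal ((1+s) ^ ((k:ℝ) - a)) := by
          refine mul_le_mul_right ?_ _
          rw [← ENNReal.ofReal_mul (by positivity)]
          refine ENNReal.ofReal_le_ofReal ?_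
          have h1 : s ^ k ≤ (1+s) ^ k := pow_le_pow_left₀ hs'.le (by linarith) k
          have h2 : ((1+s):ℝ) ^ k * (1+s) ^ (-a) = (1+s) ^ ((k:ℝ) - a) := by
            rw [← Real.rpow_natCast (1+s) k, ← Real.rpow_add h1s, sub_eq_add_neg]
          rw [← h2]
          exact mul_le_mul_of_nonneg_right h1 (Real.rpow_nonneg h1s.le _)
  calc ∫⁻ s in Set.Ioi (0:ℝ), ENNReal.ofReal (s ^ k)
          * (eLpNorm (fun x => f (u s x)) 1 volume
              + eLpNorm (fun x => f (u s x)) ⊤ volume)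
      ≤ ∫⁻ s in Set.Ioi (0:ℝ), C * ENNReal.ofReal ((1+s) ^ ((k:ℝ) - a)) :=
        lintegral_mono_ae hbound
    _ = C * ∫⁻ s in Set.Ioi (0:ℝ), ENNReal.ofReal ((1+s) ^ ((k:ℝ) - a)) :=
        lintegral_const_mul' _ _ (by rw [hC]; exact ENNReal.mul_ne_top (by simp) ENNReal.ofReal_ne_top)
    _ < ⊤ := ENNReal.mul_lt_top (by rw [hC]; exact ENNReal.mul_lt_top (by simp) ENNReal.ofReal_lt_top) hfin
end
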